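/- Let (W,b) be an n-player linear influence game in which player i is non-absolutely-indifferent ((w_i, b_i) ≠ 0) and every player j ≠ i is absolutely indifferent ((w_j, b_j) = 0). Then the true proportion of equilibria satisfies 1/2 ≤ π(W,b) ≤ 3/4. -/

import Mathlib

open Finset
open scoped Classical BigOperators

/-- The hypercube `{-1,+1}^n` of joint actions, as a finite set of real vectors. -/
noncomputable def cube (n : ℕ) : Finset (Fin n → ℝ) :=
  (Finset.univ : Finset (Fin n → Bool)).image (fun s i => if s i then (1 : ℝ) else -1)

/-- The set of pure-strategy Nash equilibria of the linear influence game `(W,b)`. -/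
noncomputable def ligNE (n : ℕ) (W : Fin n → Fin n → ℝ) (b : Fin n → ℝ) :
    Finset (Fin n → ℝ) :=
  (cube n).filter (fun x => ∀ i, 0 ≤ x i * ((∑ j ∈ Finset.univ.erase i, W i j * x j) - b i))

/-- Flip one coordinate of a Boolean vector. -/
def bflip {n : ℕ} (k : Fin n) (s : Fin n → Bool) : Fin n → Bool :=
  Function.update s k (!s k)

lemma bflip_self {n : ℕ} (k : Fin n) (s : Fin n → Bool) : bflip k s k = !s k :=
  Function.update_self _ _ _

lemma bflip_ne {n : ℕ} (k : Fin n) (s : Fin n → Bool) {j : Fin n} (h : j ≠ k) :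
    bflip k s j = s j :=
  Function.update_of_ne h _ _

lemma bflip_bflip {n : ℕ} (k : Fin n) (s : Fin n → Bool) : bflip k (bflip k s) = s := by
  funext j
  by_cases h : j = k
  · subst h; rw [bflip_self, bflip_self, Bool.not_not]
  · rw [bflip_ne _ _ h, bflip_ne _ _ h]

lemma bflip_inj {n : ℕ} (k : Fin n) : Function.Injective (bflip (n := n) k) := by
  intro s s' h
  have := congrArg (bflip k) h
  rwa [bflip_bflip, bflip_bflip] at this

/-- flipping one coordinate is a bijection of the Boolean cube. -/
lemma card_filter_bflip {n : ℕ} (k : Fin n) (p : (Fin n → Bool) → Prop)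
    [DecidablePred p] :
    ((univ : Finset (Fin n → Bool)).filter p).card
      = (univ.filter (fun s => p (bflip k s))).card := by
  refine Finset.card_bij' (fun s _ => bflip k s) (fun s _ => bflip k s) ?_ ?_ ?_ ?_
  · intro s hs
    simp only [mem_filter, mem_univ, true_and] at hs ⊢
    rwa [bflip_bflip]
  · intro s hs
    simp only [mem_filter, mem_univ, true_and] at hs ⊢
    exact hs
  · intro s _; exact bflip_bflip k s
  · intro s _; exact bflip_bflip k s

lemma card_filter_congr' {n : ℕ} {p q : (Fin n → Bool) → Prop}
    [DecidablePred p] [DecidablePred q] (h : ∀ s, p s ↔ q s) :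
    ((univ : Finset (Fin n → Bool)).filter p).card = (univ.filter q).card := by
  congr 1
  ext s
  simp [h s]

theorem stmt14 (n : ℕ) (W : Fin n → Fin n → ℝ) (b : Fin n → ℝ)
    (hdiag : ∀ i, W i i = 0) (i : Fin n)
    (hi : ¬((∀ j, j ≠ i → W i j = 0) ∧ b i = 0))
    (hj : ∀ j, j ≠ i → (∀ k, W j k = 0) ∧ b j = 0) :
    (1 / 2 : ℝ) ≤ ((ligNE n W b).card : ℝ) / 2 ^ n ∧
      ((ligNE n W b).card : ℝ) / 2 ^ n ≤ 3 / 4 := by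
  classical
  set e : (Fin n → Bool) → (Fin n → ℝ) := fun s j => if s j then (1 : ℝ) else -1 with he
  have einj : Function.Injective e := by
    intro s s' h
    funext j
    have := congrFun h j
    simp only [he] at this
    cases hs : s j <;> cases hs' : s' j <;> simp [hs, hs'] at this ⊢ <;> norm_num at this
  set g : (Fin n → Bool) → ℝ :=
    fun s => (∑ j ∈ univ.erase i, W i j * (if s j then (1 : ℝ) else -1)) - b i with hgdef
  -- g ignores coordinate i
  have hg_flip_i : ∀ s : Fin n → Bool, g (bflip i s) = g s := by
    intro s
    simp only [hgdef]
    congr 1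
    apply Finset.sum_congr rfl
    intro j hjmem
    rw [bflip_ne _ _ (Finset.mem_erase.mp hjmem).1]
  -- reduce ligNE to a filter on the Boolean cube
  have hset : ligNE n W b
      = (univ.filter (fun s => 0 ≤ (if s i then (1 : ℝ) else -1) * g s)).image e := by
    unfold ligNE cube
    rw [Finset.filter_image]
    congr 1
    apply Finset.filter_congr
    intro s _
    constructor
    · intro h
      exact h i
    · intro h i'
      by_cases hii : i' = i
      · subst hii; exact h
      · have hz := hj i' hii
        have : (∑ j ∈ univ.erase i', W i' j * e s j) - b i' = 0 := by
          rw [hz.2]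
          simp [hz.1]
        rw [this, mul_zero]
  have hcard : (ligNE n W b).card
      = (univ.filter (fun s => 0 ≤ (if s i then (1 : ℝ) else -1) * g s)).card := by
    rw [hset, Finset.card_image_of_injective _ einj]
  clear_value e g
  -- split on s i
  have hsplit : (univ.filter (fun s => 0 ≤ (if s i then (1 : ℝ) else -1) * g s)).card
      = (univ.filter (fun s : Fin n → Bool => s i = true ∧ 0 ≤ g s)).card
        + (univ.filter (fun s : Fin n → Bool => s i = false
            ∧ 0 ≤ (if s i then (1 : ℝ) else -1) * g s)).card := by
    have h0 := Finset.card_filter_add_card_filter_not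
      (s := (univ : Finset (Fin n → Bool)).filter
        (fun s => 0 ≤ (if s i then (1 : ℝ) else -1) * g s))
      (p := fun s => s i = true)
    rw [Finset.filter_filter, Finset.filter_filter] at h0
    rw [← h0]
    congr 1
    · apply card_filter_congr'
      intro s
      cases h : s i <;> simp [h]
    · apply card_filter_congr'
      intro s
      cases h : s i <;> simp [h]
  -- flip coordinate i on the part with s i = false
  have hB : (univ.filter (fun s : Fin n → Bool => s i = false
        ∧ 0 ≤ (if s i then (1 : ℝ) else -1) * g s)).card
      = (univ.filter (fun s : Fin n → Bool => s i = true ∧ g s ≤ 0)).card := by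
    refine (card_filter_bflip i _).trans ?_
    apply card_filter_congr'
    intro s
    simp only [bflip_self, hg_flip_i]
    cases h : s i <;> simp [h, neg_nonneg]
  have hsumAB : (univ.filter (fun s : Fin n → Bool => s i = true ∧ 0 ≤ g s)).card
      + (univ.filter (fun s : Fin n → Bool => s i = true ∧ g s ≤ 0)).card
      = (univ.filter (fun s : Fin n → Bool => s i = true)).card
        + (univ.filter (fun s : Fin n → Bool => s i = true ∧ g s = 0)).card := by
    have hu : (univ.filter (fun s : Fin n → Bool => s i = true ∧ 0 ≤ g s))
        ∪ (univ.filter (fun s : Fin n → Bool => s i = true ∧ g s ≤ 0))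
        = univ.filter (fun s : Fin n → Bool => s i = true) := by
      ext s
      simp only [mem_union, mem_filter, mem_univ, true_and]
      constructor
      · rintro (⟨h, _⟩ | ⟨h, _⟩) <;> exact h
      · intro h
        rcases le_total 0 (g s) with h' | h'
        · exact Or.inl ⟨h, h'⟩
        · exact Or.inr ⟨h, h'⟩
    have hv : (univ.filter (fun s : Fin n → Bool => s i = true ∧ 0 ≤ g s))
        ∩ (univ.filter (fun s : Fin n → Bool => s i = true ∧ g s ≤ 0))
        = univ.filter (fun s : Fin n → Bool => s i = true ∧ g s = 0) := by
      ext s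
      simp only [mem_inter, mem_filter, mem_univ, true_and]
      constructor
      · rintro ⟨⟨h1, h2⟩, ⟨_, h3⟩⟩
        exact ⟨h1, le_antisymm h3 h2⟩
      · rintro ⟨h1, h2⟩
        exact ⟨⟨h1, h2.ge⟩, ⟨h1, h2.le⟩⟩
    rw [← Finset.card_union_add_card_inter, hu, hv]
  have hScard : (ligNE n W b).card
      = (univ.filter (fun s : Fin n → Bool => s i = true)).card
        + (univ.filter (fun s : Fin n → Bool => s i = true ∧ g s = 0)).card := by
    rw [hcard, hsplit, hB, hsumAB]
  -- 2 * Tt.card = 2 ^ n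
  have hTcard : 2 * (univ.filter (fun s : Fin n → Bool => s i = true)).card = 2 ^ n := by
    have h1 : (univ.filter (fun s : Fin n → Bool => ¬ s i = true)).card
        = (univ.filter (fun s : Fin n → Bool => s i = true)).card := by
      refine Eq.trans ?_ (card_filter_bflip i (fun s => s i = true)).symm
      apply card_filter_congr'
      intro s
      rw [bflip_self]
      cases h : s i <;> simp [h]
    have h2 := Finset.card_filter_add_card_filter_not
      (s := (univ : Finset (Fin n → Bool))) (p := fun s => s i = true)
    rw [h1] at h2
    rw [Finset.card_univ, Fintype.card_fun] at h2
    simp only [Fintype.card_bool, Fintype.card_fin] at h2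
    linarith
  -- 2 * Z.card ≤ Tt.card
  have hZbound : 2 * (univ.filter (fun s : Fin n → Bool => s i = true ∧ g s = 0)).card
      ≤ (univ.filter (fun s : Fin n → Bool => s i = true)).card := by
    have hpart :
        (univ.filter (fun s : Fin n → Bool => s i = true ∧ g s = 0)).card
        + (univ.filter (fun s : Fin n → Bool => s i = true ∧ ¬ g s = 0)).card
        = (univ.filter (fun s : Fin n → Bool => s i = true)).card := by
      have h0 := Finset.card_filter_add_card_filter_not
        (s := (univ : Finset (Fin n → Bool)).filter (fun s : Fin n → Bool => s i = true))
        (p := fun s => g s = 0)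
      rw [Finset.filter_filter, Finset.filter_filter] at h0
      rw [← h0]
    by_cases hex : ∃ k, k ≠ i ∧ W i k ≠ 0
    · obtain ⟨k, hki, hWk⟩ := hex
      have hflipg : ∀ s : Fin n → Bool, g s = 0 → g (bflip k s) ≠ 0 := by
        intro s hs
        have hkmem : k ∈ univ.erase i := Finset.mem_erase.mpr ⟨hki, Finset.mem_univ k⟩
        have hsum : g (bflip k s) - g s
            = W i k * ((if !s k then (1:ℝ) else -1) - (if s k then (1:ℝ) else -1)) := by
          simp only [hgdef]
          rw [sub_sub_sub_cancel_right, ← Finset.sum_sub_distrib]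
          rw [Finset.sum_eq_single_of_mem k hkmem]
          · rw [bflip_self, mul_sub]
          · intro j hjm hjk
            rw [bflip_ne _ _ hjk, sub_self]
        have hne : (if !s k then (1:ℝ) else -1) - (if s k then (1:ℝ) else -1) ≠ 0 := by
          cases h : s k <;> norm_num [h]
        rw [hs, sub_zero] at hsum
        rw [hsum]
        exact mul_ne_zero hWk hne
      have hinj : (univ.filter (fun s : Fin n → Bool => s i = true ∧ g s = 0)).card
          ≤ (univ.filter (fun s : Fin n → Bool => s i = true ∧ ¬ g s = 0)).card := by
        apply Finset.card_le_card_of_injOn (bflip k)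
        · intro s hs
          rw [Finset.mem_coe, Finset.mem_filter] at hs
          rw [Finset.mem_coe, Finset.mem_filter]
          refine ⟨Finset.mem_univ _, ?_, hflipg s hs.2.2⟩
          rw [bflip_ne _ _ (Ne.symm hki)]
          exact hs.2.1
        · exact fun s _ s' _ h => bflip_inj k h
      linarith
    · -- all weights of player i vanish, so b i ≠ 0 and g never vanishes
      push_neg at hex
      have hbi : b i ≠ 0 := by
        intro hb
        exact hi ⟨fun j hji => hex j hji, hb⟩
      have hgne : ∀ s : Fin n → Bool, g s ≠ 0 := by
        intro s
        simp only [hgdef]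
        have : (∑ j ∈ univ.erase i, W i j * (if s j then (1:ℝ) else -1)) = 0 := by
          apply Finset.sum_eq_zero
          intro j hjm
          rw [hex j (Finset.mem_erase.mp hjm).1, zero_mul]
        rw [this, zero_sub]
        exact neg_ne_zero.mpr hbi
      have hzero :
          (univ.filter (fun s : Fin n → Bool => s i = true ∧ g s = 0)) = ∅ := by
        apply Finset.filter_false_of_mem
        intro s _
        rintro ⟨_, h⟩
        exact hgne s h
      rw [hzero]
      simp
  -- final arithmetic
  have h2n : (0:ℝ) < 2 ^ n := by positivity
  have hT : (2:ℝ) * (univ.filter (fun s : Fin n → Bool => s i = true)).card = 2 ^ n := by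
    exact_mod_cast hTcard
  have hZ' : (2:ℝ) * (univ.filter (fun s : Fin n → Bool => s i = true ∧ g s = 0)).card
      ≤ (univ.filter (fun s : Fin n → Bool => s i = true)).card := by
    exact_mod_cast hZbound
  have hzpos : (0:ℝ)
      ≤ (univ.filter (fun s : Fin n → Bool => s i = true ∧ g s = 0)).card :=
    Nat.cast_nonneg _
  have hS : ((ligNE n W b).card : ℝ)
      = (univ.filter (fun s : Fin n → Bool => s i = true)).card
        + (univ.filter (fun s : Fin n → Bool => s i = true ∧ g s = 0)).card := by
    exact_mod_cast hScard
  constructor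
  · rw [le_div_iff₀ h2n, hS]
    nlinarith
  · rw [div_le_iff₀ h2n, hS]
    nlinarith
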